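/- Let -1/2 < a ≤ 4 and t ∈ [-a-1, -1/2). Define b(t) = -(t^4+(a+4)t^3+(5a+4)t^2+4(a+1)t+2a+2)/(2t+1) and c(t) = (2t^4+2(a+1)t^3+(2a+4)t^2+(3a+4)t-a)/(2t+1). Then for every real b, the inequality w_4 + a·w_3 + b·w_2 + c(t)·w_1 ≥ 0 holds for all real x, y, z if and only if b ≥ b(t). -/

import Mathlib

set_option maxHeartbeats 1000000


theorem stmt_8 (a t : ℝ) (ha1 : -1/2 < a) (ha2 : a ≤ 4)
    (ht1 : -a-1 ≤ t) (ht2 : t < -1/2)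
    (bt ct : ℝ)
    (hbt : bt = -(t^4+(a+4)*t^3+(5*a+4)*t^2+4*(a+1)*t+2*a+2)/(2*t+1))
    (hct : ct = (2*t^4+2*(a+1)*t^3+(2*a+4)*t^2+(3*a+4)*t-a)/(2*t+1))
    (b : ℝ) :
    (∀ x y z : ℝ, 0 ≤ (x^4+y^4+z^4) + a*(x^3*y+y^3*z+z^3*x+x*y^3+y*z^3+z*x^3) + b*(x^2*y^2+y^2*z^2+z^2*x^2) + ct*(x*y*z*(x+y+z))) ↔ b ≥ bt := by
  have hd : 2*t+1 < 0 := by linarith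
  have hd0 : (2*t+1) ≠ 0 := ne_of_lt hd
  have hbt' : bt*(2*t+1) = -(t^4+(a+4)*t^3+(5*a+4)*t^2+4*(a+1)*t+2*a+2) := by
    rw [hbt]; exact div_mul_cancel₀ _ hd0
  have hct' : ct*(2*t+1) = 2*t^4+2*(a+1)*t^3+(2*a+4)*t^2+(3*a+4)*t-a := by
    rw [hct]; field_simp
  constructor
  · intro h
    have h1 := h t 1 1
    have e : (2*t+1)*(2*t^2+1)*(b - bt) =
        (2*t+1) * ((t^4+1^4+1^4) + a*(t^3*1+1^3*1+1^3*t+t*1^3+1*1^3+1*t^3) + b*(t^2*1^2+1^2*1^2+1^2*t^2) + ct*(t*1*1*(t+1+1))) := by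
      linear_combination (-(2*t^2+1))*hbt' + (-(t^2+2*t))*hct'
    have h3 : (2*t+1)*(2*t^2+1) < 0 := mul_neg_of_neg_of_pos hd (by positivity)
    by_contra hb
    push_neg at hb
    have h4 : 0 < (-((2*t+1)*(2*t^2+1))) * (bt - b) :=
      mul_pos (by linarith) (by linarith)
    have h5 : (2*t+1) * ((t^4+1^4+1^4) + a*(t^3*1+1^3*1+1^3*t+t*1^3+1*1^3+1*t^3) + b*(t^2*1^2+1^2*1^2+1^2*t^2) + ct*(t*1*1*(t+1+1))) ≤ 0 :=
      mul_nonpos_of_nonpos_of_nonneg hd.le h1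
    nlinarith [e, h4, h5]
  · intro hb x y z
    have hM : 0 ≤ 2*(t+2)^2+(a-4)*(2*t+1) := by
      nlinarith [mul_nonneg (by linarith : (0:ℝ) ≤ 4-a) (by linarith : (0:ℝ) ≤ -(2*t+1)), sq_nonneg (t+2)]
    have hal : 0 ≤ (2*t+1)^2*(2*(t+2)^2+(a-4)*(2*t+1)) := mul_nonneg (sq_nonneg _) hM
    have hbe : 0 ≤ -2*(2*t+1)*(a+t+1) := by
      nlinarith [mul_nonneg (by linarith : (0:ℝ) ≤ -(2*t+1)) (by linarith : (0:ℝ) ≤ a+t+1)]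
    have hK : 0 < 6*(2*t+1)^2*(1-t) := by
      have h2 : 0 < (2*t+1)^2 := by positivity
      nlinarith
    have key : 6*(2*t+1)^2*(1-t) * ((x^4+y^4+z^4) + a*(x^3*y+y^3*z+z^3*x+x*y^3+y*z^3+z*x^3) + b*(x^2*y^2+y^2*z^2+z^2*x^2) + ct*(x*y*z*(x+y+z)))
        = ((2*t+1)^2*(2*(t+2)^2+(a-4)*(2*t+1))) * (((y-z)*(y+z-(t+1)*x))^2 + ((z-x)*(z+x-(t+1)*y))^2 + ((x-y)*(x+y-(t+1)*z))^2)
          + (-2*(2*t+1)*(a+t+1)) * ((2*t+1)*(x^2+y^2+z^2)-(t^2+2)*(x*y+y*z+z*x))^2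
          + (6*(2*t+1)^2*(1-t)) * (b - bt) * (x^2*y^2+y^2*z^2+z^2*x^2) := by
      linear_combination (6*(2*t+1)*(1-t)*(x^2*y^2+y^2*z^2+z^2*x^2))*hbt'
        + (6*(2*t+1)*(1-t)*(x*y*z*(x+y+z)))*hct'
    have hrhs : 0 ≤ 6*(2*t+1)^2*(1-t) * ((x^4+y^4+z^4) + a*(x^3*y+y^3*z+z^3*x+x*y^3+y*z^3+z*x^3) + b*(x^2*y^2+y^2*z^2+z^2*x^2) + ct*(x*y*z*(x+y+z))) := by
      rw [key]
      have s1 : 0 ≤ ((y-z)*(y+z-(t+1)*x))^2 + ((z-x)*(z+x-(t+1)*y))^2 + ((x-y)*(x+y-(t+1)*z))^2 := by positivity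
      have s2 : 0 ≤ ((2*t+1)*(x^2+y^2+z^2)-(t^2+2)*(x*y+y*z+z*x))^2 := sq_nonneg _
      have s3 : 0 ≤ x^2*y^2+y^2*z^2+z^2*x^2 := by positivity
      have hbb : 0 ≤ b - bt := by linarith [hb]
      exact add_nonneg (add_nonneg (mul_nonneg hal s1) (mul_nonneg hbe s2))
        (mul_nonneg (mul_nonneg hK.le hbb) s3)
    exact nonneg_of_mul_nonneg_right hrhs hK
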